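/- Let N ≥ 2 and let r be an ultrametric on {1,…,N} with r(i,j) > 0 for i ≠ j, whose enumeration is length-minimal. Define the depths d_n(r) := (1/2)·max_{1 ≤ i,j ≤ n} r(i,j) for 1 ≤ n ≤ N (so d_1(r) = 0). Then for every n with 2 ≤ n ≤ N: d_n(r) = (1/2)·( d_{n−1}(r) + max( ℓ_n(r) − ℓ_{n−1}(r), d_{n−1}(r) ) ). -/

import Mathlib

open Finset

/-- `r` is an ultrametric matrix on `{1,…,N}` (encoded by `Fin N`): nonnegative,
symmetric, vanishing on the diagonal, and satisfying the strong triangle inequality. -/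
def IsUltramat {N : ℕ} (r : Fin N → Fin N → ℝ) : Prop :=
  (∀ i j, 0 ≤ r i j) ∧ (∀ i j, r i j = r j i) ∧ (∀ i, r i i = 0) ∧
    (∀ i j k, r i k ≤ max (r i j) (r j k))

/-- `ell r n` is the total length `ℓ_n(r)` of the subtree spanned by the first `n`
points: half the minimum of `Σ_{i=1}^n r(i,σ(i))` over single-`n`-cycle permutations `σ`
of `{1,…,n}`, for `2 ≤ n ≤ N`; and `0` otherwise (in particular `ℓ_1(r) = 0`). -/
noncomputable def ell {N : ℕ} (r : Fin N → Fin N → ℝ) (n : ℕ) : ℝ :=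
  if h : 2 ≤ n ∧ n ≤ N then
    (1 / 2) * sInf { x : ℝ | ∃ σ : Equiv.Perm (Fin n), σ.IsCycle ∧ σ.support = Finset.univ ∧
      x = ∑ i : Fin n, r (Fin.castLE h.2 i) (Fin.castLE h.2 (σ i)) }
  else 0

/-- The enumeration of the points of `r` is length-minimal: for every permutation `τ` of
`{1,…,N}`, the vector `(ℓ_1(r),…,ℓ_N(r))` is lexicographically at most
`(ℓ_1(r^τ),…,ℓ_N(r^τ))`, where `r^τ(i,j) = r(τ(i),τ(j))`. -/
def LengthMinimal {N : ℕ} (r : Fin N → Fin N → ℝ) : Prop :=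
  ∀ τ : Equiv.Perm (Fin N),
    (∀ n, n ≤ N → ell r n = ell (fun i j => r (τ i) (τ j)) n) ∨
    (∃ n, n ≤ N ∧ (∀ m, m < n → ell r m = ell (fun i j => r (τ i) (τ j)) m) ∧
      ell r n < ell (fun i j => r (τ i) (τ j)) n)

/-- `depthFn r n` is the depth `d_n(r) = (1/2)·max_{1 ≤ i,j ≤ n} r(i,j)` of the subtree
spanned by the first `n` points, for `1 ≤ n ≤ N`; and `0` otherwise. -/
noncomputable def depthFn {N : ℕ} (r : Fin N → Fin N → ℝ) (n : ℕ) : ℝ :=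
  if h : 1 ≤ n ∧ n ≤ N then
    (1 / 2) * sSup { x : ℝ | ∃ i j : Fin n, x = r (Fin.castLE h.2 i) (Fin.castLE h.2 j) }
  else 0

namespace DepthRecAux

open Equiv Equiv.Perm

/-! ### Generic permutation helpers -/

lemma permApplyInvSelf {α : Type*} (f : Equiv.Perm α) (x : α) : f (f⁻¹ x) = x :=
  Equiv.apply_symm_apply f x

lemma permInvApplySelf {α : Type*} (f : Equiv.Perm α) (x : α) : f⁻¹ (f x) = x :=
  Equiv.symm_apply_apply f x

lemma permPowSucc {α : Type*} (σ : Equiv.Perm α) (k : ℕ) (x : α) :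
    (σ ^ (k + 1)) x = σ ((σ ^ k) x) := by
  rw [pow_succ' σ k, Equiv.Perm.mul_apply]

lemma support_univ_moves {m : ℕ} {σ : Equiv.Perm (Fin m)} (hs : σ.support = Finset.univ)
    (z : Fin m) : σ z ≠ z :=
  Equiv.Perm.mem_support.mp (hs.symm ▸ Finset.mem_univ z)

/-- transporting powers through `Fin.castSucc`. -/
lemma conj_pow {m : ℕ} (τ : Equiv.Perm (Fin (m + 1))) (σ' : Equiv.Perm (Fin m))
    (h : ∀ z, τ z.castSucc = (σ' z).castSucc) (k : ℕ) (z : Fin m) :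
    (τ ^ k) z.castSucc = ((σ' ^ k) z).castSucc := by
  induction k with
  | zero => simp
  | succ k ih => rw [permPowSucc, permPowSucc, ih, h]

lemma conj_zpow {m : ℕ} (τ : Equiv.Perm (Fin (m + 1))) (σ' : Equiv.Perm (Fin m))
    (h : ∀ z, τ z.castSucc = (σ' z).castSucc) (k : ℤ) (z : Fin m) :
    (τ ^ k) z.castSucc = ((σ' ^ k) z).castSucc := by
  have hinv : ∀ z, τ⁻¹ z.castSucc = (σ'⁻¹ z).castSucc := by
    intro z
    have h1 := h (σ'⁻¹ z)
    rw [permApplyInvSelf] at h1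
    rw [← h1, permInvApplySelf]
  cases k with
  | ofNat k => simpa using conj_pow τ σ' h k z
  | negSucc k =>
      rw [zpow_negSucc, zpow_negSucc, ← inv_pow, ← inv_pow]
      exact conj_pow τ⁻¹ σ'⁻¹ hinv (k + 1) z

/-! ### Spec lemmas for `ell` and `depthFn` -/

lemma ell_spec {N n : ℕ} (r : Fin N → Fin N → ℝ) (h2 : 2 ≤ n) (hN : n ≤ N) :
    (∃ σ : Equiv.Perm (Fin n), σ.IsCycle ∧ σ.support = Finset.univ ∧
      ell r n = (1 / 2) * ∑ i : Fin n, r (Fin.castLE hN i) (Fin.castLE hN (σ i))) ∧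
    (∀ σ : Equiv.Perm (Fin n), σ.IsCycle → σ.support = Finset.univ →
      ell r n ≤ (1 / 2) * ∑ i : Fin n, r (Fin.castLE hN i) (Fin.castLE hN (σ i))) := by
  classical
  have h : 2 ≤ n ∧ n ≤ N := ⟨h2, hN⟩
  set S : Set ℝ := { x : ℝ | ∃ σ : Equiv.Perm (Fin n), σ.IsCycle ∧ σ.support = Finset.univ ∧
      x = ∑ i : Fin n, r (Fin.castLE hN i) (Fin.castLE hN (σ i)) } with hSdef
  have hell : ell r n = (1 / 2) * sInf S := by
    unfold ell
    rw [dif_pos h]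
  have hfin : S.Finite := by
    apply Set.Finite.subset (Set.finite_range
      (fun σ : Equiv.Perm (Fin n) =>
        ∑ i : Fin n, r (Fin.castLE hN i) (Fin.castLE hN (σ i))))
    rintro x ⟨σ, -, -, rfl⟩
    exact ⟨σ, rfl⟩
  have hne : S.Nonempty := by
    obtain ⟨k, rfl⟩ : ∃ k, n = k + 2 := ⟨n - 2, by omega⟩
    exact ⟨_, finRotate (k + 2), isCycle_finRotate, support_finRotate, rfl⟩
  obtain ⟨σ, hσ1, hσ2, hσ3⟩ := hne.csInf_mem hfin
  constructor
  · exact ⟨σ, hσ1, hσ2, by rw [hell, hσ3]⟩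
  · intro τ h1 h2'
    have hmem : (∑ i : Fin n, r (Fin.castLE hN i) (Fin.castLE hN (τ i))) ∈ S :=
      ⟨τ, h1, h2', rfl⟩
    have hle := csInf_le hfin.bddBelow hmem
    rw [hell]
    linarith

lemma depth_spec {N n : ℕ} (r : Fin N → Fin N → ℝ) (h1 : 1 ≤ n) (hN : n ≤ N) :
    (∃ i j : Fin n, depthFn r n = (1 / 2) * r (Fin.castLE hN i) (Fin.castLE hN j)) ∧
    (∀ i j : Fin n, r (Fin.castLE hN i) (Fin.castLE hN j) ≤ 2 * depthFn r n) := by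
  classical
  have h : 1 ≤ n ∧ n ≤ N := ⟨h1, hN⟩
  set S : Set ℝ := { x : ℝ | ∃ i j : Fin n, x = r (Fin.castLE hN i) (Fin.castLE hN j) }
    with hSdef
  have hdep : depthFn r n = (1 / 2) * sSup S := by
    unfold depthFn
    rw [dif_pos h]
  have hfin : S.Finite := by
    apply Set.Finite.subset (Set.finite_range
      (fun p : Fin n × Fin n => r (Fin.castLE hN p.1) (Fin.castLE hN p.2)))
    rintro x ⟨i, j, rfl⟩
    exact ⟨(i, j), rfl⟩
  have hne : S.Nonempty := by
    have : Fin n := ⟨0, by omega⟩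
    exact ⟨_, this, this, rfl⟩
  obtain ⟨i, j, hij⟩ := hne.csSup_mem hfin
  constructor
  · exact ⟨i, j, by rw [hdep, hij]⟩
  · intro i' j'
    have hmem : r (Fin.castLE hN i') (Fin.castLE hN j') ∈ S := ⟨i', j', rfl⟩
    have hle := le_csSup hfin.bddAbove hmem
    rw [hdep]
    linarith

/-! ### Inserting the new point into a cycle -/

lemma insert_cycle {m : ℕ} (σ' : Equiv.Perm (Fin m)) (hc : σ'.IsCycle)
    (hs : σ'.support = Finset.univ) (i : Fin m) :
    ∃ σ : Equiv.Perm (Fin (m + 1)), σ.IsCycle ∧ σ.support = Finset.univ ∧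
      ∀ g : Fin (m + 1) → Fin (m + 1) → ℝ,
        ∑ x : Fin (m + 1), g x (σ x)
          = (∑ z : Fin m, g z.castSucc (σ' z).castSucc)
            + (g i.castSucc (Fin.last m) + g (Fin.last m) (σ' i).castSucc
               - g i.castSucc (σ' i).castSucc) := by
  classical
  have hmoves : ∀ z : Fin m, σ' z ≠ z := support_univ_moves hs
  have hemb : ∀ z : Fin m, (Fin.castSuccEmb : Fin m ↪ Fin (m + 1)) z = z.castSucc :=
    fun _ => rfl
  have hrange : (Fin.last m) ∉ Set.range (Fin.castSuccEmb : Fin m ↪ Fin (m + 1)) := by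
    rintro ⟨z, hz⟩
    rw [hemb] at hz
    exact (Fin.castSucc_lt_last z).ne hz
  set σ : Equiv.Perm (Fin (m + 1)) :=
    (σ'.viaEmbedding Fin.castSuccEmb) * Equiv.swap i.castSucc (Fin.last m) with hσdef
  have hA : ∀ z : Fin m, z ≠ i → σ z.castSucc = (σ' z).castSucc := by
    intro z hz
    rw [hσdef, Equiv.Perm.mul_apply,
      Equiv.swap_apply_of_ne_of_ne (fun h => hz (Fin.castSucc_injective m h))
        (Fin.castSucc_lt_last z).ne]
    exact σ'.viaEmbedding_apply Fin.castSuccEmb z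
  have hB : σ i.castSucc = Fin.last m := by
    rw [hσdef, Equiv.Perm.mul_apply, Equiv.swap_apply_left]
    exact σ'.viaEmbedding_apply_of_notMem Fin.castSuccEmb _ hrange
  have hC : σ (Fin.last m) = (σ' i).castSucc := by
    rw [hσdef, Equiv.Perm.mul_apply, Equiv.swap_apply_right]
    exact σ'.viaEmbedding_apply Fin.castSuccEmb i
  have hCyc : σ.IsCycle := by
    refine ⟨Fin.last m, ?_, ?_⟩
    · rw [hC]
      exact (Fin.castSucc_lt_last (σ' i)).ne
    · intro y hy
      have key : ∀ k : ℕ, σ.SameCycle (Fin.last m) ((σ' ^ k) (σ' i)).castSucc := by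
        intro k
        induction k with
        | zero => exact ⟨1, by simpa using hC⟩
        | succ k ih =>
            by_cases hzi : (σ' ^ k) (σ' i) = i
            · rw [permPowSucc, hzi]
              exact ⟨1, by simpa using hC⟩
            · rw [permPowSucc]
              exact ih.trans ⟨1, by simpa using hA _ hzi⟩
      rcases Fin.eq_castSucc_or_eq_last y with ⟨z, rfl⟩ | rfl
      · obtain ⟨k, hk⟩ := hc.exists_pow_eq (hmoves (σ' i)) (hmoves z)
        have := key k
        rwa [hk] at this
      · exact Equiv.Perm.SameCycle.refl _ _
  have hSup : σ.support = Finset.univ := by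
    rw [Finset.eq_univ_iff_forall]
    intro x
    rw [Equiv.Perm.mem_support]
    rcases Fin.eq_castSucc_or_eq_last x with ⟨z, rfl⟩ | rfl
    · by_cases hz : z = i
      · subst hz
        rw [hB]
        exact (Fin.castSucc_lt_last z).ne'
      · rw [hA z hz]
        exact fun h => hmoves z (Fin.castSucc_injective m h)
    · rw [hC]
      exact (Fin.castSucc_lt_last (σ' i)).ne
  refine ⟨σ, hCyc, hSup, ?_⟩
  intro g
  rw [Fin.sum_univ_castSucc (fun x => g x (σ x)), hC]
  have e1 : ∑ z : Fin m, g z.castSucc (σ z.castSucc)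
      = (∑ z ∈ Finset.univ.erase i, g z.castSucc (σ' z).castSucc)
        + g i.castSucc (Fin.last m) := by
    rw [← Finset.sum_erase_add _ _ (Finset.mem_univ i), hB]
    congr 1
    exact Finset.sum_congr rfl fun z hz => by rw [hA z (Finset.ne_of_mem_erase hz)]
  have e2 : ∑ z : Fin m, g z.castSucc (σ' z).castSucc
      = (∑ z ∈ Finset.univ.erase i, g z.castSucc (σ' z).castSucc)
        + g i.castSucc (σ' i).castSucc :=
    (Finset.sum_erase_add _ _ (Finset.mem_univ i)).symm
  rw [e1, e2]
  ring

/-! ### Deleting the new point from a cycle -/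

lemma delete_cycle {m : ℕ} (hm : 2 ≤ m) (σ : Equiv.Perm (Fin (m + 1))) (hc : σ.IsCycle)
    (hs : σ.support = Finset.univ) :
    ∃ (σ' : Equiv.Perm (Fin m)) (p s : Fin m), σ'.IsCycle ∧ σ'.support = Finset.univ ∧
      ∀ g : Fin (m + 1) → Fin (m + 1) → ℝ,
        ∑ z : Fin m, g z.castSucc (σ' z).castSucc
          = (∑ x : Fin (m + 1), g x (σ x))
            - (g p.castSucc (Fin.last m) + g (Fin.last m) s.castSucc
               - g p.castSucc s.castSucc) := by
  classical
  have hmoves : ∀ x : Fin (m + 1), σ x ≠ x := support_univ_moves hs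
  have hx : σ (Fin.last m) ≠ Fin.last m := hmoves _
  have hffx : σ (σ (Fin.last m)) ≠ Fin.last m := by
    intro h2
    have horbit : ∀ k : ℕ, (σ ^ k) (Fin.last m) = Fin.last m ∨
        (σ ^ k) (Fin.last m) = σ (Fin.last m) := by
      intro k
      induction k with
      | zero => left; simp
      | succ k ih =>
          rw [permPowSucc]
          rcases ih with h | h
          · right; rw [h]
          · left; rw [h]; exact h2
    have h0m : ((⟨0, by omega⟩ : Fin (m + 1)) : Fin (m + 1)) ≠ Fin.last m := by
      intro h
      have := congrArg Fin.val h
      simp [Fin.last] at this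
      omega
    have h1m : ((⟨1, by omega⟩ : Fin (m + 1)) : Fin (m + 1)) ≠ Fin.last m := by
      intro h
      have := congrArg Fin.val h
      simp [Fin.last] at this
      omega
    have hy0 : ∃ y : Fin (m + 1), y ≠ Fin.last m ∧ y ≠ σ (Fin.last m) := by
      by_cases h01 : σ (Fin.last m) = ⟨0, by omega⟩
      · refine ⟨⟨1, by omega⟩, h1m, ?_⟩
        rw [h01]
        intro h
        have := congrArg Fin.val h
        simp at this
      · exact ⟨⟨0, by omega⟩, h0m, fun h => h01 h.symm⟩
    obtain ⟨y, hy1, hy2⟩ := hy0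
    obtain ⟨k, hk⟩ := hc.exists_pow_eq hx (hmoves y)
    rcases horbit k with h | h
    · exact hy1 (by rw [← hk]; exact h)
    · exact hy2 (by rw [← hk]; exact h)
  set τ : Equiv.Perm (Fin (m + 1)) := Equiv.swap (Fin.last m) (σ (Fin.last m)) * σ
    with hτdef
  have hcτ : τ.IsCycle := hc.swap_mul hx hffx
  have hτlast : τ (Fin.last m) = Fin.last m := by
    rw [hτdef, Equiv.Perm.mul_apply, Equiv.swap_apply_right]
  have hτinvlast : τ⁻¹ (Fin.last m) = Fin.last m := by
    conv_lhs => rw [← hτlast]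
    exact permInvApplySelf τ _
  have hτne : ∀ z : Fin m, τ z.castSucc ≠ Fin.last m := by
    intro z h
    have : z.castSucc = Fin.last m := τ.injective (h.trans hτlast.symm)
    exact (Fin.castSucc_lt_last z).ne this
  have hτinvne : ∀ z : Fin m, τ⁻¹ z.castSucc ≠ Fin.last m := by
    intro z h
    have : z.castSucc = Fin.last m := τ⁻¹.injective (h.trans hτinvlast.symm)
    exact (Fin.castSucc_lt_last z).ne this
  set σ' : Equiv.Perm (Fin m) :=
    { toFun := fun z => (τ z.castSucc).castPred (hτne z)
      invFun := fun z => (τ⁻¹ z.castSucc).castPred (hτinvne z)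
      left_inv := by
        intro z
        apply Fin.castSucc_injective
        rw [Fin.castSucc_castPred, Fin.castSucc_castPred, permInvApplySelf]
      right_inv := by
        intro z
        apply Fin.castSucc_injective
        rw [Fin.castSucc_castPred, Fin.castSucc_castPred, permApplyInvSelf] } with hσ'def
  have happly : ∀ z : Fin m, (σ' z).castSucc = τ z.castSucc := by
    intro z
    exact Fin.castSucc_castPred _ (hτne z)
  -- value of τ away from `p`
  have hplast : σ⁻¹ (Fin.last m) ≠ Fin.last m := by
    intro h
    have := congrArg σ h
    rw [permApplyInvSelf] at this
    exact hx this.symm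
  obtain ⟨p, hp⟩ : ∃ p : Fin m, p.castSucc = σ⁻¹ (Fin.last m) := by
    rcases Fin.eq_castSucc_or_eq_last (σ⁻¹ (Fin.last m)) with ⟨z, hz⟩ | h
    · exact ⟨z, hz.symm⟩
    · exact absurd h hplast
  obtain ⟨s, hsv⟩ : ∃ s : Fin m, s.castSucc = σ (Fin.last m) := by
    rcases Fin.eq_castSucc_or_eq_last (σ (Fin.last m)) with ⟨z, hz⟩ | h
    · exact ⟨z, hz.symm⟩
    · exact absurd h hx
  have hτp : τ p.castSucc = s.castSucc := by
    rw [hτdef, Equiv.Perm.mul_apply, hp, permApplyInvSelf,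
      Equiv.swap_apply_left, hsv]
  have hτother : ∀ z : Fin m, z ≠ p → τ z.castSucc = σ z.castSucc := by
    intro z hz
    rw [hτdef, Equiv.Perm.mul_apply]
    apply Equiv.swap_apply_of_ne_of_ne
    · intro h
      have : z.castSucc = σ⁻¹ (Fin.last m) := by
        rw [← h, permInvApplySelf]
      rw [← hp] at this
      exact hz (Fin.castSucc_injective m this)
    · intro h
      have : z.castSucc = Fin.last m := σ.injective h
      exact (Fin.castSucc_lt_last z).ne this
  have hpnes : p ≠ s := by
    intro h
    apply hffx
    rw [← hsv, ← h, hp, permApplyInvSelf]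
  -- support of σ'
  have hsup' : σ'.support = Finset.univ := by
    rw [Finset.eq_univ_iff_forall]
    intro z
    rw [Equiv.Perm.mem_support]
    intro h
    have hτz : τ z.castSucc = z.castSucc := by rw [← happly, h]
    by_cases hzp : z = p
    · subst hzp
      rw [hτp] at hτz
      exact hpnes (Fin.castSucc_injective m hτz).symm
    · rw [hτother z hzp] at hτz
      exact hmoves _ hτz
  have hmoves' : ∀ z : Fin m, σ' z ≠ z := support_univ_moves hsup'
  -- σ' is a cycle
  have hcyc' : σ'.IsCycle := by
    refine ⟨p, hmoves' p, ?_⟩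
    intro y hy
    have hτmp : τ p.castSucc ≠ p.castSucc := by
      rw [hτp]
      exact fun h => hpnes (Fin.castSucc_injective m h).symm
    have hτmy : τ y.castSucc ≠ y.castSucc := by
      rw [← happly]
      exact fun h => hy (Fin.castSucc_injective m h)
    obtain ⟨k, hk⟩ := hcτ.sameCycle hτmp hτmy
    refine ⟨k, ?_⟩
    have := conj_zpow τ σ' (fun z => (happly z).symm) k p
    rw [this] at hk
    exact Fin.castSucc_injective m hk
  refine ⟨σ', p, s, hcyc', hsup', ?_⟩
  intro g
  have hsum1 : ∑ x : Fin (m + 1), g x (σ x)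
      = (∑ z : Fin m, g z.castSucc (σ z.castSucc)) + g (Fin.last m) s.castSucc := by
    rw [Fin.sum_univ_castSucc (fun x => g x (σ x)), hsv]
  have hsum2 : ∑ z : Fin m, g z.castSucc (σ z.castSucc)
      = (∑ z ∈ Finset.univ.erase p, g z.castSucc (σ z.castSucc))
        + g p.castSucc (Fin.last m) := by
    have hσp : σ p.castSucc = Fin.last m := by rw [hp, permApplyInvSelf]
    rw [← Finset.sum_erase_add _ _ (Finset.mem_univ p), hσp]
  have hsum3 : ∑ z : Fin m, g z.castSucc (σ' z).castSucc
      = (∑ z ∈ Finset.univ.erase p, g z.castSucc (σ z.castSucc))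
        + g p.castSucc s.castSucc := by
    rw [← Finset.sum_erase_add _ _ (Finset.mem_univ p)]
    congr 1
    · exact Finset.sum_congr rfl fun z hz => by
        rw [happly, hτother z (Finset.ne_of_mem_erase hz)]
    · rw [happly, hτp]
  rw [hsum3, hsum1, hsum2]
  ring

/-! ### Ultrametric chain lemma: every cycle contains a long edge -/

lemma exists_big_edge {m : ℕ} {σ' : Equiv.Perm (Fin m)} (hc : σ'.IsCycle)
    (hs : σ'.support = Finset.univ) (e : Fin m → Fin m → ℝ)
    (he0 : ∀ x, e x x = 0) (htri : ∀ x y z, e x z ≤ max (e x y) (e y z))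
    {i0 j0 : Fin m} {t : ℝ} (ht : 0 < t) (hij : t ≤ e i0 j0) :
    ∃ i, t ≤ e i (σ' i) := by
  by_contra hcon
  push_neg at hcon
  have hmoves : ∀ z : Fin m, σ' z ≠ z := support_univ_moves hs
  have key : ∀ k : ℕ, e i0 ((σ' ^ k) i0) < t := by
    intro k
    induction k with
    | zero => simpa [he0] using ht
    | succ k ih =>
        have h1 := htri i0 ((σ' ^ k) i0) ((σ' ^ (k + 1)) i0)
        rw [permPowSucc] at h1 ⊢
        have h2 := hcon ((σ' ^ k) i0)
        calc e i0 (σ' ((σ' ^ k) i0)) ≤ max (e i0 ((σ' ^ k) i0))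
              (e ((σ' ^ k) i0) (σ' ((σ' ^ k) i0))) := by
                simpa [permPowSucc] using h1
          _ < t := max_lt ih h2
  obtain ⟨k, hk⟩ := hc.exists_pow_eq (hmoves i0) (hmoves j0)
  have := key k
  rw [hk] at this
  linarith

/-- a `σ'`-closed nonempty property holds everywhere on a full-support cycle. -/
lemma cycle_closure {m : ℕ} {σ' : Equiv.Perm (Fin m)} (hc : σ'.IsCycle)
    (hs : σ'.support = Finset.univ) (P : Fin m → Prop)
    (hcl : ∀ z, P z → P (σ' z)) {j0 : Fin m} (hj : P j0) : ∀ z, P z := by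
  have hmoves : ∀ z : Fin m, σ' z ≠ z := support_univ_moves hs
  intro z
  obtain ⟨k, hk⟩ := hc.exists_pow_eq (hmoves j0) (hmoves z)
  rw [← hk]
  clear hk
  induction k with
  | zero => simpa using hj
  | succ k ih =>
      rw [permPowSucc]
      exact hcl _ ih

lemma castLE_castSucc {N m : ℕ} (h1 : m + 1 ≤ N) (h2 : m ≤ N) (z : Fin m) :
    Fin.castLE h1 z.castSucc = Fin.castLE h2 z := by
  apply Fin.ext
  simp

end DepthRecAux

open DepthRecAux

/-- For a positive ultrametric on `{1,…,N}` whose enumeration is length-minimal, the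
depths satisfy the recursion `d_n = (1/2)(d_{n−1} + max(ℓ_n − ℓ_{n−1}, d_{n−1}))` for
`2 ≤ n ≤ N`. -/
theorem lengthMinimal_depth_recursion
    {N : ℕ} (hN : 2 ≤ N) (r : Fin N → Fin N → ℝ)
    (hult : IsUltramat r) (hpos : ∀ i j : Fin N, i ≠ j → 0 < r i j)
    (hmin : LengthMinimal r)
    (n : ℕ) (hn2 : 2 ≤ n) (hnN : n ≤ N) :
    depthFn r n
      = (1 / 2) * (depthFn r (n - 1)
          + max (ell r n - ell r (n - 1)) (depthFn r (n - 1))) := by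
  classical
  obtain ⟨hnn, hsym, hdiag, htri⟩ := hult
  obtain ⟨m, rfl⟩ : ∃ m, n = m + 1 := ⟨n - 1, by omega⟩
  have hm1 : 1 ≤ m := by omega
  have hmN : m ≤ N := by omega
  simp only [Nat.add_sub_cancel]
  have hq : ∀ z : Fin m, Fin.castLE hnN z.castSucc = Fin.castLE hmN z :=
    castLE_castSucc hnN hmN
  have hql : ∀ z : Fin m, Fin.castLE hmN z ≠ Fin.castLE hnN (Fin.last m) := by
    intro z h
    have := congrArg Fin.val h
    simp [Fin.last] at this
    omega
  rcases Nat.lt_or_ge m 2 with hm2 | hm2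
  · -- base case : n = 2
    have hm : m = 1 := by omega
    subst hm
    -- ell r 1 = 0
    have ell1 : ell r 1 = 0 := by
      unfold ell
      rw [dif_neg (by omega : ¬(2 ≤ 1 ∧ 1 ≤ N))]
    -- depthFn r 1 = 0
    have dep1 : depthFn r 1 = 0 := by
      obtain ⟨⟨i, j, hd⟩, -⟩ := depth_spec r (le_refl 1) (by omega : 1 ≤ N)
      have hij : i = j := Subsingleton.elim i j
      rw [hd, hij, hdiag]
      ring
    -- value of ell r 2
    obtain ⟨⟨σ, hcσ, hsσ, hvσ⟩, -⟩ := ell_spec r (by omega : 2 ≤ 1 + 1) hnN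
    have hσ0 : σ 0 = 1 := by
      have h0 : σ 0 ≠ 0 := support_univ_moves hsσ 0
      have hlt : (σ 0).val < 2 := (σ 0).isLt
      have hne : (σ 0).val ≠ 0 := fun h => h0 (Fin.ext h)
      have e1 : ((1 : Fin (1 + 1)) : ℕ) = 1 := rfl
      exact Fin.ext (by omega)
    have hσ1 : σ 1 = 0 := by
      have h1 : σ 1 ≠ 1 := support_univ_moves hsσ 1
      have hlt : (σ 1).val < 2 := (σ 1).isLt
      have hne : (σ 1).val ≠ 1 := fun h => h1 (Fin.ext h)
      have e0 : ((0 : Fin (1 + 1)) : ℕ) = 0 := rfl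
      have e1 : ((1 : Fin (1 + 1)) : ℕ) = 1 := rfl
      exact Fin.ext (by omega)
    have ell2 : ell r (1 + 1) = r (Fin.castLE hnN 0) (Fin.castLE hnN 1) := by
      rw [hvσ, Fin.sum_univ_two, hσ0, hσ1,
        hsym (Fin.castLE hnN 1) (Fin.castLE hnN 0)]
      ring
    -- value of depthFn r 2
    have hr01pos : 0 < r (Fin.castLE hnN 0) (Fin.castLE hnN 1) := by
      apply hpos
      intro h
      have := congrArg Fin.val h
      simp at this
    obtain ⟨⟨i, j, hd⟩, hdub⟩ := depth_spec r (by omega : 1 ≤ 1 + 1) hnN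
    have dep2 : depthFn r (1 + 1) = (1 / 2) * r (Fin.castLE hnN 0) (Fin.castLE hnN 1) := by
      have hub : r (Fin.castLE hnN i) (Fin.castLE hnN j)
          ≤ r (Fin.castLE hnN 0) (Fin.castLE hnN 1) := by
        by_cases hij : i = j
        · rw [hij, hdiag]
          linarith
        · have hiv : i.val < 2 := i.isLt
          have hjv : j.val < 2 := j.isLt
          have hne : i.val ≠ j.val := fun h => hij (Fin.ext h)
          have e0 : ((0 : Fin (1 + 1)) : ℕ) = 0 := rfl
          have e1 : ((1 : Fin (1 + 1)) : ℕ) = 1 := rfl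
          rcases Nat.lt_or_ge i.val 1 with h1 | h1
          · have hi0 : i = 0 := Fin.ext (by omega)
            have hj1 : j = 1 := Fin.ext (by omega)
            rw [hi0, hj1]
          · have hi1 : i = 1 := Fin.ext (by omega)
            have hj0 : j = 0 := Fin.ext (by omega)
            rw [hi1, hj0, hsym]
      have hlb := hdub 0 1
      rw [hd]
      rw [hd] at hlb
      linarith
    rw [dep1, dep2, ell1, ell2, sub_zero, max_eq_left (le_of_lt hr01pos)]
    ring
  · -- main case : m ≥ 2
    -- depth at level m
    obtain ⟨⟨i0, j0, hD⟩, hDub⟩ := depth_spec r hm1 hmN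
    set D : ℝ := 2 * depthFn r m with hDdef
    have hDval : r (Fin.castLE hmN i0) (Fin.castLE hmN j0) = D := by
      rw [hDdef, hD]; ring
    have hDub' : ∀ i j : Fin m, r (Fin.castLE hmN i) (Fin.castLE hmN j) ≤ D := hDub
    have hDpos : 0 < D := by
      have h01 : (⟨0, by omega⟩ : Fin m) ≠ (⟨1, by omega⟩ : Fin m) := by
        intro h
        have := congrArg Fin.val h
        simp at this
      have hne : Fin.castLE hmN (⟨0, by omega⟩ : Fin m)
          ≠ Fin.castLE hmN (⟨1, by omega⟩ : Fin m) := by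
        intro h
        have := congrArg Fin.val h
        simp at this
      have := hpos _ _ hne
      have h2 := hDub' ⟨0, by omega⟩ ⟨1, by omega⟩
      linarith
    -- minimal distance from the new point
    obtain ⟨j₀, -, hj₀⟩ := Finset.exists_min_image Finset.univ
      (fun j : Fin m => r (Fin.castLE hmN j) (Fin.castLE hnN (Fin.last m)))
      ⟨⟨0, by omega⟩, Finset.mem_univ _⟩
    set a : ℝ := r (Fin.castLE hmN j₀) (Fin.castLE hnN (Fin.last m)) with hadef
    have hamin : ∀ j : Fin m, a ≤ r (Fin.castLE hmN j) (Fin.castLE hnN (Fin.last m)) :=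
      fun j => hj₀ j (Finset.mem_univ j)
    have hapos : 0 < a := hpos _ _ (hql j₀)
    -- ell specs
    obtain ⟨⟨σm, hcm, hsm, hvm⟩, hubm⟩ := ell_spec r hm2 hmN
    obtain ⟨⟨σn, hcn, hsn, hvn⟩, hubn⟩ := ell_spec r (by omega : 2 ≤ m + 1) hnN
    -- lower bound for the increment
    obtain ⟨σ', p, s, hcyc', hsup', hsumdel⟩ := delete_cycle hm2 σn hcn hsn
    have hlow : ∀ δ : ℝ,
        (r (Fin.castLE hmN p) (Fin.castLE hnN (Fin.last m))
          + r (Fin.castLE hnN (Fin.last m)) (Fin.castLE hmN s)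
          - r (Fin.castLE hmN p) (Fin.castLE hmN s) ≥ δ) →
        ell r (m + 1) - ell r m ≥ δ / 2 := by
      intro δ hδ
      have hkey := hsumdel (fun x y => r (Fin.castLE hnN x) (Fin.castLE hnN y))
      have hconv : ∑ z : Fin m, r (Fin.castLE hnN z.castSucc)
            (Fin.castLE hnN (σ' z).castSucc)
          = ∑ z : Fin m, r (Fin.castLE hmN z) (Fin.castLE hmN (σ' z)) :=
        Finset.sum_congr rfl fun z _ => by rw [hq, hq]
      rw [hconv] at hkey
      have hub := hubm σ' hcyc' hsup'
      rw [hkey] at hub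
      rw [hq p, hq s] at hub
      rw [hvn]
      linarith
    -- upper bound for the increment, given a good insertion position
    have hupp : ∀ (i : Fin m) (δ : ℝ),
        (r (Fin.castLE hmN i) (Fin.castLE hnN (Fin.last m))
          + r (Fin.castLE hnN (Fin.last m)) (Fin.castLE hmN (σm i))
          - r (Fin.castLE hmN i) (Fin.castLE hmN (σm i)) ≤ δ) →
        ell r (m + 1) - ell r m ≤ δ / 2 := by
      intro i δ hδ
      obtain ⟨σ, hcσ, hsσ, hsum⟩ := insert_cycle σm hcm hsm i
      have hkey := hsum (fun x y => r (Fin.castLE hnN x) (Fin.castLE hnN y))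
      have hconv : ∑ z : Fin m, r (Fin.castLE hnN z.castSucc)
            (Fin.castLE hnN (σm z).castSucc)
          = ∑ z : Fin m, r (Fin.castLE hmN z) (Fin.castLE hmN (σm z)) :=
        Finset.sum_congr rfl fun z _ => by rw [hq, hq]
      rw [hconv] at hkey
      have hub := hubn σ hcσ hsσ
      rw [hkey] at hub
      rw [hq i, hq (σm i)] at hub
      rw [hvm]
      linarith
    -- depth spec at level m+1
    obtain ⟨⟨i1, j1, hd1⟩, hdub1⟩ := depth_spec r (by omega : 1 ≤ m + 1) hnN
    by_cases hcase : ∀ j : Fin m,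
        r (Fin.castLE hmN j) (Fin.castLE hnN (Fin.last m)) ≤ D
    · -- Case A : the new point attaches inside; a ≤ D
      have haD : a ≤ D := hcase j₀
      -- upper bound : there is an insertion of cost ≤ a
      have hupA : ell r (m + 1) - ell r m ≤ a / 2 := by
        by_cases hB : ∃ i : Fin m,
            r (Fin.castLE hmN i) (Fin.castLE hnN (Fin.last m)) ≤ a ∧
            a < r (Fin.castLE hmN (σm i)) (Fin.castLE hnN (Fin.last m))
        · obtain ⟨i, hi1, hi2⟩ := hB
          apply hupp i
          have h1 := htri (Fin.castLE hmN (σm i)) (Fin.castLE hmN i)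
            (Fin.castLE hnN (Fin.last m))
          have h2 : r (Fin.castLE hmN (σm i)) (Fin.castLE hnN (Fin.last m))
              ≤ r (Fin.castLE hmN (σm i)) (Fin.castLE hmN i) := by
            rcases le_max_iff.mp h1 with h | h
            · exact h
            · linarith
          have h3 : r (Fin.castLE hnN (Fin.last m)) (Fin.castLE hmN (σm i))
              ≤ r (Fin.castLE hmN i) (Fin.castLE hmN (σm i)) := by
            rw [hsym (Fin.castLE hnN (Fin.last m)) (Fin.castLE hmN (σm i)),
              hsym (Fin.castLE hmN i) (Fin.castLE hmN (σm i))]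
            linarith
          linarith
        · -- all neighbours of points at distance a stay at distance a
          push_neg at hB
          have hall : ∀ j : Fin m,
              r (Fin.castLE hmN j) (Fin.castLE hnN (Fin.last m)) ≤ a := by
            apply cycle_closure hcm hsm
              (fun j => r (Fin.castLE hmN j) (Fin.castLE hnN (Fin.last m)) ≤ a)
              (fun z hz => hB z hz) (j0 := j₀) (le_refl a)
          -- there is an edge of the cycle of length ≥ a
          obtain ⟨i, hedge⟩ := exists_big_edge hcm hsm
            (fun x y => r (Fin.castLE hmN x) (Fin.castLE hmN y))
            (fun x => hdiag _) (fun x y z => htri _ _ _) hapos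
            (show a ≤ r (Fin.castLE hmN i0) (Fin.castLE hmN j0) by rw [hDval]; exact haD)
          apply hupp i
          have he1 : r (Fin.castLE hmN i) (Fin.castLE hnN (Fin.last m)) ≤ a := hall i
          have he2 : r (Fin.castLE hnN (Fin.last m)) (Fin.castLE hmN (σm i)) ≤ a := by
            rw [hsym]
            exact hall (σm i)
          linarith
      -- lower bound : removing costs ≥ a
      have hloA : ell r (m + 1) - ell r m ≥ a / 2 := by
        apply hlow
        have h1 := htri (Fin.castLE hmN p) (Fin.castLE hnN (Fin.last m))
          (Fin.castLE hmN s)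
        have hp1 := hamin p
        have hs1 := hamin s
        rcases le_max_iff.mp h1 with h | h
        · have := hsym (Fin.castLE hnN (Fin.last m)) (Fin.castLE hmN s)
          linarith
        · have := hsym (Fin.castLE hnN (Fin.last m)) (Fin.castLE hmN s)
          linarith
      have hdiff : ell r (m + 1) - ell r m = a / 2 := le_antisymm hupA hloA
      -- depth at level m+1 equals depth at level m
      have hdepn : depthFn r (m + 1) = depthFn r m := by
        have hub : r (Fin.castLE hnN i1) (Fin.castLE hnN j1) ≤ D := by
          rcases Fin.eq_castSucc_or_eq_last i1 with ⟨zi, rfl⟩ | rfl <;>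
            rcases Fin.eq_castSucc_or_eq_last j1 with ⟨zj, rfl⟩ | rfl
          · rw [hq, hq]; exact hDub' zi zj
          · rw [hq]; exact hcase zi
          · rw [hq, hsym]; exact hcase zj
          · rw [hdiag]; linarith
        have hlb : D ≤ 2 * depthFn r (m + 1) := by
          have := hdub1 i0.castSucc j0.castSucc
          rw [hq, hq, hDval] at this
          exact this
        rw [hd1] at hlb ⊢
        linarith
      rw [hdepn, hdiff, max_eq_right (by linarith : a / 2 ≤ depthFn r m)]
      ring
    · -- Case B : the new point is far; all distances to it are equal to a > D
      push_neg at hcase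
      obtain ⟨jb, hjb⟩ := hcase
      have hstep : ∀ j : Fin m,
          r (Fin.castLE hmN j) (Fin.castLE hnN (Fin.last m))
            = r (Fin.castLE hmN jb) (Fin.castLE hnN (Fin.last m)) := by
        intro j
        have hsub1 : r (Fin.castLE hmN j) (Fin.castLE hnN (Fin.last m))
            ≤ r (Fin.castLE hmN jb) (Fin.castLE hnN (Fin.last m)) := by
          have h1 := htri (Fin.castLE hmN j) (Fin.castLE hmN jb)
            (Fin.castLE hnN (Fin.last m))
          rcases le_max_iff.mp h1 with h | h
          · have := hDub' j jb
            linarith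
          · exact h
        have hsub2 : r (Fin.castLE hmN jb) (Fin.castLE hnN (Fin.last m))
            ≤ r (Fin.castLE hmN j) (Fin.castLE hnN (Fin.last m)) := by
          have h1 := htri (Fin.castLE hmN jb) (Fin.castLE hmN j)
            (Fin.castLE hnN (Fin.last m))
          rcases le_max_iff.mp h1 with h | h
          · have := hDub' jb j
            linarith
          · exact h
        exact le_antisymm hsub1 hsub2
      have hallB : ∀ j : Fin m,
          r (Fin.castLE hmN j) (Fin.castLE hnN (Fin.last m)) = a := by
        intro j
        rw [hstep j, ← hstep j₀]
      have haD : D < a := by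
        rw [← hallB jb]
        exact hjb
      -- upper bound : insert at an edge of length D
      have hupB : ell r (m + 1) - ell r m ≤ (2 * a - D) / 2 := by
        obtain ⟨i, hedge⟩ := exists_big_edge hcm hsm
          (fun x y => r (Fin.castLE hmN x) (Fin.castLE hmN y))
          (fun x => hdiag _) (fun x y z => htri _ _ _) hDpos (le_of_eq hDval.symm)
        apply hupp i
        have he1 := hallB i
        have he2 := hallB (σm i)
        have := hsym (Fin.castLE hnN (Fin.last m)) (Fin.castLE hmN (σm i))
        linarith
      have hloB : ell r (m + 1) - ell r m ≥ (2 * a - D) / 2 := by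
        apply hlow
        have hp1 := hallB p
        have hs1 := hallB s
        have hps := hDub' p s
        have := hsym (Fin.castLE hnN (Fin.last m)) (Fin.castLE hmN s)
        linarith
      have hdiff : ell r (m + 1) - ell r m = (2 * a - D) / 2 := le_antisymm hupB hloB
      -- depth at level m+1 equals a/2
      have hdepn : 2 * depthFn r (m + 1) = a := by
        have hub : r (Fin.castLE hnN i1) (Fin.castLE hnN j1) ≤ a := by
          rcases Fin.eq_castSucc_or_eq_last i1 with ⟨zi, rfl⟩ | rfl <;>
            rcases Fin.eq_castSucc_or_eq_last j1 with ⟨zj, rfl⟩ | rfl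
          · rw [hq, hq]
            have := hDub' zi zj
            linarith
          · rw [hq]; exact (hallB zi).le
          · rw [hq zj, hsym]; exact (hallB zj).le
          · rw [hdiag]; linarith
        have hlb : a ≤ 2 * depthFn r (m + 1) := by
          have := hdub1 j₀.castSucc (Fin.last m)
          rw [hq] at this
          rw [hadef]
          exact this
        rw [hd1] at hlb ⊢
        linarith
      rw [hdiff, max_eq_left (by linarith : depthFn r m ≤ (2 * a - D) / 2)]
      linarith
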